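/- arXiv:2211.16714 — 2 statements merged into one kernel-verified Lean document; each statement's English description precedes it below -/
import Mathlib

section
/- (Active groups bounded by truncation level) In the setting of the slice sampler, suppose group indices g₁,...,g_N satisfy u_i < π_{g_i} for every i, let K^a = max_i g_i, let u* = min_i u_i, and let K* be the smallest k with u* > 1 − Σ_{j=1}^k π_j. Then K^a ≤ K*. -/
theorem stmt9 (N : ℕ) (hN : 0 < N) (u : Fin N → ℝ) (hu : ∀ i, u i ∈ Set.Ioc (0:ℝ) 1)
    (π : ℕ → ℝ) (hπ : ∀ j, 0 ≤ π j)
    (hsum : ∀ k, ∑ j ∈ Finset.Icc 1 k, π j ≤ 1)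
    (g : Fin N → ℕ) (hg : ∀ i, u i < π (g i))
    (Ka : ℕ) (hKa : IsGreatest (Set.range g) Ka)
    (ustar : ℝ) (hustar : IsLeast (Set.range u) ustar)
    (Kstar : ℕ) (hK1 : 0 < Kstar)
    (hK2 : ustar > 1 - ∑ j ∈ Finset.Icc 1 Kstar, π j)
    (hK3 : ∀ k, 0 < k → ustar > 1 - ∑ j ∈ Finset.Icc 1 k, π j → Kstar ≤ k) :
    Ka ≤ Kstar := by
  by_contra h
  push_neg at h
  obtain ⟨i, hi⟩ := hKa.1
  have h1 : ustar ≤ u i := hustar.2 ⟨i, rfl⟩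
  have h2 : u i < π Ka := hi ▸ hg i
  have hnot : Ka ∉ Finset.Icc 1 Kstar := by
    simp [Finset.mem_Icc]; omega
  have hsub : insert Ka (Finset.Icc 1 Kstar) ⊆ Finset.Icc 1 Ka := by
    intro x hx
    simp only [Finset.mem_insert, Finset.mem_Icc] at hx ⊢
    omega
  have hle : π Ka + ∑ j ∈ Finset.Icc 1 Kstar, π j ≤ ∑ j ∈ Finset.Icc 1 Ka, π j := by
    rw [← Finset.sum_insert hnot]
    exact Finset.sum_le_sum_of_subset_of_nonneg hsub (fun j _ _ => hπ j)
  have := hsum Ka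
  linarith
end

section
/- (Swap invariance of the constraint energy) Let N ≥ 2, let W : Fin N × Fin N → ℝ be symmetric (W_{mn} = W_{nm}) with zero diagonal (W_{nn} = 0), and let j ≠ k be two indices with W_{jn} = W_{kn} for all n. For a group assignment G : Fin N → ℕ define δ_{mn}(G) = 1 if G(m) = G(n) and −1 otherwise, and let s_{jk}(G) be the assignment obtained from G by swapping the values at j and k. Then Σ_{m,n} W_{mn} δ_{mn}(G) = Σ_{m,n} W_{mn} δ_{mn}(s_{jk}(G)). -/
theorem stmt12 (N : ℕ) (W : Fin N → Fin N → ℝ)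
    (hsymm : ∀ m n, W m n = W n m) (hdiag : ∀ n, W n n = 0)
    (j k : Fin N) (hjk : j ≠ k) (hW : ∀ n, W j n = W k n)
    (G : Fin N → ℕ) :
    (∑ m, ∑ n, W m n * (if G m = G n then (1:ℝ) else -1)) =
    (∑ m, ∑ n, W m n *
      (if G (Equiv.swap j k m) = G (Equiv.swap j k n) then (1:ℝ) else -1)) := by
  have hfst : ∀ a b, W (Equiv.swap j k a) b = W a b := by
    intro a b
    rcases eq_or_ne a j with rfl | haj
    · rw [Equiv.swap_apply_left, ← hW]
    rcases eq_or_ne a k with rfl | hak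
    · rw [Equiv.swap_apply_right, hW]
    · rw [Equiv.swap_apply_of_ne_of_ne haj hak]
  have hWswap : ∀ a b, W (Equiv.swap j k a) (Equiv.swap j k b) = W a b := by
    intro a b
    rw [hfst, hsymm, hfst, hsymm]
  rw [Fintype.sum_equiv (Equiv.swap j k) _ _ (fun m => ?_)]
  rw [Fintype.sum_equiv (Equiv.swap j k) _ _ (fun n => ?_)]
  rw [hWswap, Equiv.swap_apply_self, Equiv.swap_apply_self]
end
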